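/- Let n and k be integers with k ≥ 1 and n > k+1. Then τ_{n,k} ≥ (2k-1)!! / ((n+k-1)(n+k-3)⋯(n-k+1)), where (n+k-1)(n+k-3)⋯(n-k+1) = ∏_{j=1}^{k} (n+k+1-2j). -/

import Mathlib

open Polynomial Finset

/-- The odd double factorial `(2k-1)!! = 1·3·5⋯(2k-1)`. -/
noncomputable def oddDoubleFac (k : ℕ) : ℝ := ∏ j ∈ Finset.range k, (2 * (j : ℝ) + 1)

open Polynomial.Chebyshev




noncomputable def ch (n : ℤ) (j : ℕ) : ℝ[X] := derivative^[j] (Chebyshev.T ℝ n)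

lemma ch_succ (n : ℤ) (j : ℕ) : ch n (j+1) = derivative (ch n j) :=
  Function.iterate_succ_apply' _ _ _

lemma ode (n : ℤ) (k : ℕ) : (1 - X^2 : ℝ[X]) * ch n (k+2) =
    (2*(k:ℝ[X])+1) * X * ch n (k+1) - ((n:ℝ[X])^2 - (k:ℝ[X])^2) * ch n k := by
  induction k with
  | zero =>
    have h1 := T_derivative_eq_U (R := ℝ) n
    have h2 := add_one_mul_T_eq_poly_in_U (R := ℝ) (n - 1)
    have h3 : derivative (derivative (T ℝ n)) = (n:ℝ[X]) * derivative (U ℝ (n-1)) := by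
      rw [h1]; simp [derivative_mul]
    show (1 - X^2 : ℝ[X]) * derivative^[2] (T ℝ n) = _ * X * derivative^[1] (T ℝ n) - _ * derivative^[0] (T ℝ n)
    simp only [Function.iterate_succ_apply', Function.iterate_zero_apply, Function.iterate_one]
    rw [h3, h1]
    simp only [sub_add_cancel] at h2
    push_cast at h2 ⊢
    generalize U ℝ (n-1) = u at *
    generalize derivative u = du at *
    linear_combination (norm := ring_nf) (n:ℝ[X]) * h2
  | succ k ih =>
    have dih := congrArg derivative ih
    simp only [derivative_mul, derivative_sub, derivative_one, derivative_X_pow, derivative_X,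
      derivative_add, derivative_ofNat, derivative_natCast, derivative_intCast, derivative_pow,
      map_ofNat] at dih
    norm_num [C_eq_natCast] at dih
    rw [show (Polynomial.C (2:ℝ)) = (2:ℝ[X]) from map_ofNat Polynomial.C 2] at dih
    rw [show ch n (k+1+2) = derivative (ch n (k+2)) from ch_succ n (k+2),
        show ch n (k+1+1) = derivative (ch n (k+1)) from ch_succ n (k+1),
        show ch n (k+1) = derivative (ch n k) from ch_succ n k] at *
    push_cast at dih ⊢
    generalize derivative (ch n k) = a at *
    generalize derivative a = b at *
    generalize derivative b = c3 at *
    linear_combination (norm := ring_nf) dih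


noncomputable def tz (m : ℕ) : ℝ := (Chebyshev.T ℝ (m:ℤ)).eval 0
noncomputable def uz (m : ℕ) : ℝ := (Chebyshev.U ℝ (m:ℤ)).eval 0

lemma tz_add_two (m : ℕ) : tz (m+2) = -tz m := by
  unfold tz
  have h := T_add_two ℝ (m:ℤ)
  rw [show ((m:ℤ) + 2) = ((m+2 : ℕ) : ℤ) by push_cast; ring] at h
  rw [h]
  simp

lemma uz_add_two (m : ℕ) : uz (m+2) = -uz m := by
  unfold uz
  have h := U_add_two ℝ (m:ℤ)
  rw [show ((m:ℤ) + 2) = ((m+2 : ℕ) : ℤ) by push_cast; ring] at h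
  rw [h]
  simp

def Zstmt (m : ℕ) : Prop :=
  (Even m → tz m ^ 2 = 1 ∧ uz m ^ 2 = 1) ∧ (¬ Even m → tz m = 0 ∧ uz m = 0)

lemma Z_all (m : ℕ) : Zstmt m ∧ Zstmt (m+1) := by
  induction m with
  | zero =>
    constructor
    · constructor
      · intro _; constructor <;> simp [tz, uz, T_zero, U_zero]
      · intro h; exact absurd Even.zero h
    · constructor
      · intro h; exact absurd h (by simp)
      · intro _; constructor <;> simp [tz, uz, T_one, U_one]
  | succ m ih =>
    refine ⟨ih.2, ?_, ?_⟩
    · intro h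
      have hm : Even m := by rw [Nat.even_iff] at h ⊢; omega
      obtain ⟨h1, h2⟩ := (ih.1).1 hm
      rw [tz_add_two, uz_add_two]
      constructor <;> [rw [neg_pow]; rw [neg_pow]] <;> simp [h1, h2]
    · intro h
      have hm : ¬ Even m := by rw [Nat.even_iff] at h ⊢; omega
      obtain ⟨h1, h2⟩ := (ih.1).2 hm
      rw [tz_add_two, uz_add_two, h1, h2]
      simp

lemma T_eval_one (m : ℤ) : (Chebyshev.T ℝ m).eval 1 = 1 := by
  induction m using Polynomial.Chebyshev.induct with
  | zero => simp [T_zero]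
  | one => simp [T_one]
  | add_two m ih1 ih2 => rw [T_add_two]; simp [ih1, ih2]; ring
  | neg_add_one m ih1 ih2 =>
    have h3 : (Chebyshev.T ℝ (m:ℤ)).eval 1 = 1 := by rw [← T_neg]; exact ih1
    rw [T_sub_one]; simp [ih1, ih2, h3]; linarith


noncomputable def gz (n : ℕ) (j : ℕ) : ℝ := (ch (n:ℤ) j).eval 0
noncomputable def Ak (n k : ℕ) : ℝ := ∏ j ∈ range k, ((n:ℝ)^2 - (j:ℝ)^2)
noncomputable def Pk (n k : ℕ) : ℝ := ∏ j ∈ range k, ((n:ℝ) + (k:ℝ) - 1 - 2*(j:ℝ))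

lemma ode_eval (n : ℕ) (k : ℕ) (x : ℝ) : (1 - x^2) * (ch (n:ℤ) (k+2)).eval x =
    (2*(k:ℝ)+1) * x * (ch (n:ℤ) (k+1)).eval x - ((n:ℝ)^2 - (k:ℝ)^2) * (ch (n:ℤ) k).eval x := by
  have h := congrArg (Polynomial.eval x) (ode (n:ℤ) k)
  simpa using h

lemma gz_rec (n k : ℕ) : gz n (k+2) = -((n:ℝ)^2 - (k:ℝ)^2) * gz n k := by
  have h := ode_eval n k 0
  unfold gz
  simp only [ne_eq, OfNat.ofNat_ne_zero, not_false_eq_true, zero_pow, sub_zero, one_mul,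
    mul_zero, zero_mul] at h
  linarith [h]

lemma gz_zero (n : ℕ) : gz n 0 = tz n := rfl

lemma gz_one (n : ℕ) (hn : 1 ≤ n) : gz n 1 = (n:ℝ) * uz (n-1) := by
  unfold gz uz
  rw [show ch (n:ℤ) 1 = derivative (Chebyshev.T ℝ (n:ℤ)) from rfl, T_derivative_eq_U,
    show ((n:ℤ) - 1) = (((n-1:ℕ)):ℤ) by omega]
  simp

lemma Pk_two_step (n k : ℕ) :
    Pk n (k+2) = ((n:ℝ)+(k:ℝ)+1) * ((n:ℝ)-(k:ℝ)-1) * Pk n k := by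
  unfold Pk
  rw [Finset.prod_range_succ', Finset.prod_range_succ]
  push_cast
  rw [show (∏ j ∈ range k, ((n:ℝ) + (k+2) - 1 - 2*((j:ℝ)+1))) = ∏ j ∈ range k, ((n:ℝ) + k - 1 - 2*(j:ℝ)) from Finset.prod_congr rfl (by intro j _; push_cast; ring)]
  ring

def Wstmt (n k : ℕ) : Prop :=
  (Even (n+k) → (Pk n k)^2 * (gz n k)^2 = (Ak n k)^2) ∧ (¬ Even (n+k) → gz n k = 0)

lemma W_all (n : ℕ) (hn : 1 ≤ n) (k : ℕ) : Wstmt n k ∧ Wstmt n (k+1) := by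
  induction k with
  | zero =>
    constructor
    · constructor
      · intro h
        have h2 : Even n := by simpa using h
        have := ((Z_all n).1).1 h2
        simp [Pk, Ak, gz_zero, this.1]
      · intro h
        have h2 : ¬ Even n := by simpa using h
        exact (gz_zero n) ▸ (((Z_all n).1).2 h2).1
    · constructor
      · intro h
        have h2 : ¬ Even n := by
          rw [Nat.even_iff] at h ⊢; omega
        have h3 : Even (n-1) := by rw [Nat.even_iff] at h2 ⊢; omega
        have := ((Z_all (n-1)).1).1 h3
        rw [gz_one n hn]
        unfold Pk Ak
        simp only [Finset.prod_range_one, Finset.prod_range_succ, Finset.prod_range_zero]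
        push_cast
        nlinarith [this.2]
      · intro h
        have h2 : Even n := by rw [Nat.even_iff] at h ⊢; omega
        have h3 : ¬ Even (n-1) := by rw [Nat.even_iff] at h2 ⊢; omega
        have := ((Z_all (n-1)).1).2 h3
        rw [gz_one n hn, this.2, mul_zero]
  | succ k ih =>
    refine ⟨ih.2, ?_, ?_⟩
    · intro h
      have h2 : Even (n+k) := by rw [Nat.even_iff] at h ⊢; omega
      have hPg := (ih.1).1 h2
      rw [gz_rec, Pk_two_step]
      unfold Ak
      rw [Finset.prod_range_succ, Finset.prod_range_succ]
      rw [show (Ak n k) = ∏ j ∈ range k, ((n:ℝ)^2 - (j:ℝ)^2) from rfl] at hPg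
      push_cast at hPg ⊢
      linear_combination ((n:ℝ)^2-((k:ℝ)+1)^2)^2 * ((n:ℝ)^2-(k:ℝ)^2)^2 * hPg
    · intro h
      have h2 : ¬ Even (n+k) := by rw [Nat.even_iff] at h ⊢; omega
      rw [gz_rec, ((ih.1).2 h2), mul_zero]
lemma T_comp_neg (m : ℕ) : (T ℝ (m:ℤ)).comp (-X) = (-1)^m * T ℝ (m:ℤ) := by
  induction m using Nat.twoStepInduction with
  | zero => simp [T_zero]
  | one => simp [T_one]
  | more m ih1 ih2 =>
    have h := T_add_two ℝ (m:ℤ)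
    have h2 : ((m:ℤ) + 2) = ((m+2 : ℕ) : ℤ) := by push_cast; ring
    have h1 : ((m:ℤ) + 1) = ((m+1 : ℕ) : ℤ) := by push_cast; ring
    rw [h2, h1] at h
    have := congrArg (fun p => p.comp (-X : ℝ[X])) h
    simp only [sub_comp, mul_comp, ofNat_comp, X_comp] at this
    rw [ih2, ih1] at this
    rw [this, h]
    ring
lemma ch_comp_neg (n : ℕ) (j : ℕ) :
    (ch (n:ℤ) j).comp (-X) = (-1)^(n+j) * ch (n:ℤ) j := by
  induction j with
  | zero => simpa [ch] using T_comp_neg n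
  | succ j ih =>
    have := congrArg derivative ih
    rw [derivative_comp, derivative_mul] at this
    simp only [derivative_neg, derivative_X, derivative_pow, derivative_one, neg_zero,
      mul_zero, zero_mul, zero_add] at this
    rw [ch_succ, show (-1:ℝ[X])^(n+(j+1)) = (-1) * (-1)^(n+j) by ring]
    linear_combination -this

lemma ch_eval_neg (n : ℕ) (j : ℕ) (x : ℝ) :
    (ch (n:ℤ) j).eval (-x) = (-1)^(n+j) * (ch (n:ℤ) j).eval x := by
  have := congrArg (Polynomial.eval x) (ch_comp_neg n j)
  simpa [eval_comp] using this

noncomputable def ez (n : ℕ) (j : ℕ) : ℝ := (ch (n:ℤ) j).eval 1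

lemma ez_zero (n : ℕ) : ez n 0 = 1 := T_eval_one (n:ℤ)

lemma ez_rec (n k : ℕ) : (2*(k:ℝ)+1) * ez n (k+1) = ((n:ℝ)^2 - (k:ℝ)^2) * ez n k := by
  have h := ode_eval n k 1
  unfold ez
  simp only [one_pow, sub_self, zero_mul, mul_one] at h
  linarith [h]

lemma D_mul_ez (n k : ℕ) : oddDoubleFac k * ez n k = Ak n k := by
  induction k with
  | zero => simp [oddDoubleFac, Ak, ez_zero]
  | succ k ih =>
    have h := ez_rec n k
    unfold oddDoubleFac Ak at *
    rw [Finset.prod_range_succ, Finset.prod_range_succ]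
    calc (∏ j ∈ range k, (2*(j:ℝ)+1)) * (2*(k:ℝ)+1) * ez n (k+1)
        = (∏ j ∈ range k, (2*(j:ℝ)+1)) * ((2*(k:ℝ)+1) * ez n (k+1)) := by ring
      _ = (∏ j ∈ range k, (2*(j:ℝ)+1)) * (((n:ℝ)^2 - (k:ℝ)^2) * ez n k) := by rw [h]
      _ = ((∏ j ∈ range k, (2*(j:ℝ)+1)) * ez n k) * ((n:ℝ)^2 - (k:ℝ)^2) := by ring
      _ = _ := by rw [ih]

lemma D_pos (k : ℕ) : 0 < oddDoubleFac k := by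
  unfold oddDoubleFac
  exact Finset.prod_pos (fun j _ => by positivity)

lemma Ak_pos (n k : ℕ) (h : k ≤ n) : 0 < Ak n k := by
  unfold Ak
  refine Finset.prod_pos (fun j hj => ?_)
  rw [Finset.mem_range] at hj
  have : (j:ℝ) < (n:ℝ) := by exact_mod_cast by omega
  nlinarith [this, Nat.cast_nonneg (α := ℝ) j]

lemma Pk_pos (n k : ℕ) (h : k ≤ n) : 0 < Pk n k := by
  unfold Pk
  refine Finset.prod_pos (fun j hj => ?_)
  rw [Finset.mem_range] at hj
  have hj' : (j:ℝ) + 1 ≤ (k:ℝ) := by exact_mod_cast hj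
  have hkn : (k:ℝ) ≤ (n:ℝ) := by exact_mod_cast h
  linarith

lemma ez_pos (n k : ℕ) (h : k ≤ n) : 0 < ez n k := by
  have h1 := D_mul_ez n k
  have h2 := D_pos k
  have h3 := Ak_pos n k h
  nlinarith

lemma G_ineq (n k : ℕ) (h : k + 1 ≤ n) :
    (Pk n (k+1))^2 ≤ ((n:ℝ)^2 - (k:ℝ)^2) * (Pk n k)^2 := by
  have hsplit1 : Pk n (k+1) = (∏ j ∈ range k, ((n:ℝ) + (k:ℝ) - 2*(j:ℝ))) * ((n:ℝ) - (k:ℝ)) := by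
    unfold Pk
    rw [Finset.prod_range_succ]
    push_cast
    exact congrArg₂ _ (Finset.prod_congr rfl (fun j _ => by ring)) (by ring)
  have hsplit2 : Pk n (k+1) = (∏ j ∈ range k, ((n:ℝ) + (k:ℝ) - 2 - 2*(j:ℝ))) * ((n:ℝ) + (k:ℝ)) := by
    unfold Pk
    rw [Finset.prod_range_succ']
    push_cast
    exact congrArg₂ _ (Finset.prod_congr rfl (fun j _ => by ring)) (by ring)
  have hkey : (∏ j ∈ range k, ((n:ℝ) + (k:ℝ) - 2*(j:ℝ))) * (∏ j ∈ range k, ((n:ℝ) + (k:ℝ) - 2 - 2*(j:ℝ)))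
      ≤ (Pk n k)^2 := by
    unfold Pk
    rw [← Finset.prod_mul_distrib, sq, ← Finset.prod_mul_distrib]
    refine Finset.prod_le_prod (fun j hj => ?_) (fun j hj => ?_)
    · rw [Finset.mem_range] at hj
      have hj' : (j:ℝ) + 1 ≤ (k:ℝ) := by exact_mod_cast hj
      have hkn : (k:ℝ) + 1 ≤ (n:ℝ) := by exact_mod_cast h
      nlinarith
    · nlinarith [sq_nonneg ((n:ℝ) + (k:ℝ) - 1 - 2*(j:ℝ))]
  have hnk : 0 ≤ ((n:ℝ) - (k:ℝ)) * ((n:ℝ) + (k:ℝ)) := by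
    have : (k:ℝ) + 1 ≤ (n:ℝ) := by exact_mod_cast h
    nlinarith [Nat.cast_nonneg (α := ℝ) k]
  calc (Pk n (k+1))^2 = (((∏ j ∈ range k, ((n:ℝ) + (k:ℝ) - 2*(j:ℝ))) * (∏ j ∈ range k, ((n:ℝ) + (k:ℝ) - 2 - 2*(j:ℝ))))) * (((n:ℝ) - (k:ℝ)) * ((n:ℝ) + (k:ℝ))) := by
        rw [sq]; nth_rewrite 1 [hsplit1]; nth_rewrite 1 [hsplit2]; ring
    _ ≤ (Pk n k)^2 * (((n:ℝ) - (k:ℝ)) * ((n:ℝ) + (k:ℝ))) := by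
        apply mul_le_mul_of_nonneg_right hkey hnk
    _ = ((n:ℝ)^2 - (k:ℝ)^2) * (Pk n k)^2 := by ring

lemma Icc_prod_eq_Pk (n k : ℕ) :
    (∏ j ∈ Finset.Icc 1 k, ((n : ℝ) + (k : ℝ) + 1 - 2 * (j : ℝ))) = Pk n k := by
  unfold Pk
  have hmap : Finset.Icc 1 k = (Finset.range k).map ⟨fun i => i + 1, fun a b hab => by simpa using hab⟩ := by
    ext a
    simp only [Finset.mem_map, Finset.mem_range, Finset.mem_Icc, Function.Embedding.coeFn_mk]
    constructor
    · rintro ⟨h1, h2⟩; exact ⟨a - 1, by omega, by show a - 1 + 1 = a; omega⟩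
    · rintro ⟨b, hb, rfl⟩; show 1 ≤ b + 1 ∧ b + 1 ≤ k; omega
  rw [hmap]
  rw [Finset.prod_map]
  refine Finset.prod_congr rfl (fun j _ => ?_)
  change (n:ℝ) + (k:ℝ) + 1 - 2 * (((j + 1 : ℕ)) : ℝ) = (n:ℝ) + (k:ℝ) - 1 - 2 * (j:ℝ)
  push_cast; ring

lemma key_sq (n k : ℕ) (hn : k + 1 < n) (ω : ℝ)
    (hωroot : (ch (n:ℤ) (k+1)).eval ω = 0)
    (hωmax : ∀ x : ℝ, (ch (n:ℤ) (k+1)).eval x = 0 → x ≤ ω) :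
    (Ak n k)^2 ≤ (Pk n k)^2 * ((ch (n:ℤ) k).eval ω)^2 := by
  have hn1 : 1 ≤ n := by omega
  have hω0 : 0 ≤ ω := by
    have h1 : (ch (n:ℤ) (k+1)).eval (-ω) = 0 := by
      rw [ch_eval_neg n (k+1) ω, hωroot, mul_zero]
    linarith [hωmax _ h1]
  set c : ℝ := (n:ℝ)^2 - (k:ℝ)^2 with hc
  have hcast : (k:ℝ) + 1 ≤ (n:ℝ) := by exact_mod_cast (by omega : k+1 ≤ n)
  have hcpos : 0 < c := by
    have h2 : (0:ℝ) ≤ k := Nat.cast_nonneg k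
    nlinarith
  set f : ℝ → ℝ := fun x => c * ((ch (n:ℤ) k).eval x * (ch (n:ℤ) k).eval x)
      + (1 - x^2) * ((ch (n:ℤ) (k+1)).eval x * (ch (n:ℤ) (k+1)).eval x) with hf
  have hder : ∀ x : ℝ, HasDerivAt f (4*(k:ℝ)*x*((ch (n:ℤ) (k+1)).eval x)^2) x := by
    intro x
    have h1 : HasDerivAt (fun x => (ch (n:ℤ) k).eval x) ((ch (n:ℤ) (k+1)).eval x) x := by
      have := Polynomial.hasDerivAt (ch (n:ℤ) k) x
      rwa [← ch_succ] at this
    have h2 : HasDerivAt (fun x => (ch (n:ℤ) (k+1)).eval x) ((ch (n:ℤ) (k+2)).eval x) x := by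
      have := Polynomial.hasDerivAt (ch (n:ℤ) (k+1)) x
      rwa [← ch_succ] at this
    have h3 : HasDerivAt (fun x : ℝ => (1:ℝ) - x^2) (-(2*x)) x := by
      have := ((hasDerivAt_pow 2 x).const_sub (1:ℝ))
      simpa using this
    have h4 := ((h1.mul h1).const_mul c).add (h3.mul (h2.mul h2))
    have hode := ode_eval n k x
    have heq : c * ((ch (n:ℤ) (k+1)).eval x * (ch (n:ℤ) k).eval x
          + (ch (n:ℤ) k).eval x * (ch (n:ℤ) (k+1)).eval x)
        + (-(2*x) * ((ch (n:ℤ) (k+1)).eval x * (ch (n:ℤ) (k+1)).eval x)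
          + (1 - x^2) * ((ch (n:ℤ) (k+2)).eval x * (ch (n:ℤ) (k+1)).eval x
            + (ch (n:ℤ) (k+1)).eval x * (ch (n:ℤ) (k+2)).eval x))
        = 4*(k:ℝ)*x*((ch (n:ℤ) (k+1)).eval x)^2 := by
      linear_combination 2 * (ch (n:ℤ) (k+1)).eval x * hode
    rw [← heq]
    exact h4
  have hmono : MonotoneOn f (Set.Icc 0 ω) := by
    apply monotoneOn_of_deriv_nonneg (convex_Icc 0 ω)
    · exact (Differentiable.continuous (fun x => (hder x).differentiableAt)).continuousOn
    · intro x _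
      exact (hder x).differentiableAt.differentiableWithinAt
    · intro x hx
      rw [interior_Icc] at hx
      rw [(hder x).deriv]
      have h0x : 0 ≤ x := le_of_lt hx.1
      positivity
  have hle : f 0 ≤ f ω :=
    hmono (Set.mem_Icc.2 ⟨le_refl 0, hω0⟩) (Set.mem_Icc.2 ⟨hω0, le_refl ω⟩) hω0
  have hfω : f ω = c * ((ch (n:ℤ) k).eval ω)^2 := by
    rw [hf]; simp only [hωroot]; ring
  have hf0 : f 0 = c * (gz n k)^2 + (gz n (k+1))^2 := by
    rw [hf]; unfold gz; ring_nf
  rw [hfω] at hle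
  rw [hf0] at hle
  rcases Nat.even_or_odd (n+k) with he | ho
  · have hPg := ((W_all n hn1 k).1).1 he
    have h5 : (gz n k)^2 ≤ ((ch (n:ℤ) k).eval ω)^2 := by nlinarith [sq_nonneg (gz n (k+1))]
    calc (Ak n k)^2 = (Pk n k)^2 * (gz n k)^2 := hPg.symm
      _ ≤ (Pk n k)^2 * ((ch (n:ℤ) k).eval ω)^2 :=
          mul_le_mul_of_nonneg_left h5 (sq_nonneg _)
  · have hgz : gz n k = 0 := ((W_all n hn1 k).1).2 (by rw [Nat.even_iff]; rw [Nat.odd_iff] at ho; omega)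
    have hEv : Even (n + (k+1)) := by
      rw [Nat.even_iff]; rw [Nat.odd_iff] at ho; omega
    have hPg1 := ((W_all n hn1 k).2).1 hEv
    have hA1 : Ak n (k+1) = Ak n k * c := by
      unfold Ak; rw [Finset.prod_range_succ]
    have hG := G_ineq n k (by omega)
    have hstar : (gz n (k+1))^2 ≤ c * ((ch (n:ℤ) k).eval ω)^2 := by
      rw [hgz] at hle; nlinarith
    have s1 : (Pk n (k+1))^2 * (gz n (k+1))^2 ≤ (Pk n (k+1))^2 * (c * ((ch (n:ℤ) k).eval ω)^2) :=
      mul_le_mul_of_nonneg_left hstar (sq_nonneg _)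
    have s2 : (Pk n (k+1))^2 * (c * ((ch (n:ℤ) k).eval ω)^2)
        ≤ (c * (Pk n k)^2) * (c * ((ch (n:ℤ) k).eval ω)^2) := by
      apply mul_le_mul_of_nonneg_right hG
      positivity
    have hfinal : c^2 * (Ak n k)^2 ≤ c^2 * ((Pk n k)^2 * ((ch (n:ℤ) k).eval ω)^2) := by
      have e1 : c^2 * (Ak n k)^2 = (Pk n (k+1))^2 * (gz n (k+1))^2 := by
        rw [hPg1, hA1]; ring
      nlinarith [s1, s2, e1]
    exact le_of_mul_le_mul_left hfinal (by positivity)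

theorem stmt5 (n k : ℕ) (hk : 1 ≤ k) (hn : k + 1 < n) (ω : ℝ)
    (hωroot : (derivative^[k + 1] (Chebyshev.T ℝ (n : ℤ))).eval ω = 0)
    (hωmax : ∀ x : ℝ, (derivative^[k + 1] (Chebyshev.T ℝ (n : ℤ))).eval x = 0 → x ≤ ω) :
    oddDoubleFac k / (∏ j ∈ Finset.Icc 1 k, ((n : ℝ) + (k : ℝ) + 1 - 2 * (j : ℝ))) ≤
      |(derivative^[k] (Chebyshev.T ℝ (n : ℤ))).eval ω| /
        (derivative^[k] (Chebyshev.T ℝ (n : ℤ))).eval 1 := by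
  have hkn : k ≤ n := by omega
  have hroot' : (ch (n:ℤ) (k+1)).eval ω = 0 := hωroot
  have hmax' : ∀ x : ℝ, (ch (n:ℤ) (k+1)).eval x = 0 → x ≤ ω := hωmax
  have key := key_sq n k hn ω hroot' hmax'
  have hez : (derivative^[k] (Chebyshev.T ℝ (n : ℤ))).eval 1 = ez n k := rfl
  have hch : (derivative^[k] (Chebyshev.T ℝ (n : ℤ))).eval ω = (ch (n:ℤ) k).eval ω := rfl
  rw [hez, hch, Icc_prod_eq_Pk n k,
    div_le_div_iff₀ (Pk_pos n k hkn) (ez_pos n k hkn), D_mul_ez n k]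
  have h2 : (Ak n k)^2 ≤ (|(ch (n:ℤ) k).eval ω| * Pk n k)^2 := by
    rw [mul_pow, sq_abs]; nlinarith [key]
  exact le_of_pow_le_pow_left₀ two_ne_zero (mul_nonneg (abs_nonneg _) (Pk_pos n k hkn).le) h2
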